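/- Fundamental theorem of Hopf modules: for a Hopf algebra H over a field F and a left H-Hopf module M, the map θ : H ⊗ M^{coH} → M, θ(h ⊗ m) = h · m, is an isomorphism of left H-Hopf modules, with inverse m ↦ m_{[-1](1)} ⊗ S(m_{[-1](2)}) · m_{[0]}, where H ⊗ M^{coH} carries the action h' · (h ⊗ m) = h'h ⊗ m and coaction h ⊗ m ↦ h_{(1)} ⊗ h_{(2)} ⊗ m. -/

import Mathlib

set_option maxHeartbeats 1000000
set_option synthInstance.maxHeartbeats 200000


open TensorProduct LinearMap

noncomputable section FTHMauxSection

namespace FTHMaux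

open Coalgebra HopfAlgebra

variable {F H : Type*} [CommRing F] [Ring H] [HopfAlgebra F H]
variable {B : Type*} [Ring B] [Algebra F B]

/-- The convolution product of two linear maps from a Hopf algebra to an algebra. -/
noncomputable def conv (f g : H →ₗ[F] B) : H →ₗ[F] B :=
  LinearMap.mul' F B ∘ₗ TensorProduct.map f g ∘ₗ (Coalgebra.comul (R := F))

lemma conv_apply (f g : H →ₗ[F] B) (h : H) :
    conv f g h = LinearMap.mul' F B (TensorProduct.map f g (Coalgebra.comul h)) := rfl

lemma conv_assoc (f g k : H →ₗ[F] B) : conv (conv f g) k = conv f (conv g k) := by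
  apply LinearMap.ext; intro h
  have W : LinearMap.mul' F B ∘ₗ TensorProduct.map (LinearMap.mul' F B) LinearMap.id ∘ₗ
        TensorProduct.map (TensorProduct.map f g) k =
      (LinearMap.mul' F B ∘ₗ TensorProduct.map LinearMap.id (LinearMap.mul' F B) ∘ₗ
        TensorProduct.map f (TensorProduct.map g k)) ∘ₗ
        (TensorProduct.assoc F H H H).toLinearMap := by
    apply TensorProduct.ext_threefold
    intro a b c
    simp [mul_assoc]
  have A : ∀ c : H ⊗[F] H,
      LinearMap.mul' F B (TensorProduct.map (conv f g) k c) =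
      (LinearMap.mul' F B ∘ₗ TensorProduct.map (LinearMap.mul' F B) LinearMap.id ∘ₗ
        TensorProduct.map (TensorProduct.map f g) k)
        ((Coalgebra.comul (R := F)).rTensor H c) := by
    intro c
    induction c using TensorProduct.induction_on with
    | zero => simp
    | tmul a b => simp [conv_apply]
    | add x y hx hy => simp [hx, hy]
  have A' : ∀ c : H ⊗[F] H,
      LinearMap.mul' F B (TensorProduct.map f (conv g k) c) =
      (LinearMap.mul' F B ∘ₗ TensorProduct.map LinearMap.id (LinearMap.mul' F B) ∘ₗ
        TensorProduct.map f (TensorProduct.map g k))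
        ((Coalgebra.comul (R := F)).lTensor H c) := by
    intro c
    induction c using TensorProduct.induction_on with
    | zero => simp
    | tmul a b => simp [conv_apply]
    | add x y hx hy => simp [hx, hy]
  rw [conv_apply, conv_apply, A, A', W]
  simp only [LinearMap.comp_apply, LinearEquiv.coe_coe]
  rw [Coalgebra.coassoc_apply]

lemma conv_unit_left (f : H →ₗ[F] B) :
    conv ((Algebra.linearMap F B) ∘ₗ (Coalgebra.counit (R := F) (A := H))) f = f := by
  apply LinearMap.ext; intro h
  have A : ∀ c : H ⊗[F] H,
      LinearMap.mul' F B
        (TensorProduct.map ((Algebra.linearMap F B) ∘ₗ Coalgebra.counit) f c) =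
      (LinearMap.mul' F B ∘ₗ TensorProduct.map (Algebra.linearMap F B) f)
        ((Coalgebra.counit (R := F)).rTensor H c) := by
    intro c
    induction c using TensorProduct.induction_on with
    | zero => simp
    | tmul a b => simp
    | add x y hx hy => simp only [map_add, hx, hy]
  rw [conv_apply, A, Coalgebra.rTensor_counit_comul]
  simp

lemma conv_unit_right (f : H →ₗ[F] B) :
    conv f ((Algebra.linearMap F B) ∘ₗ (Coalgebra.counit (R := F) (A := H))) = f := by
  apply LinearMap.ext; intro h
  have A : ∀ c : H ⊗[F] H,
      LinearMap.mul' F B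
        (TensorProduct.map f ((Algebra.linearMap F B) ∘ₗ Coalgebra.counit) c) =
      (LinearMap.mul' F B ∘ₗ TensorProduct.map f (Algebra.linearMap F B))
        ((Coalgebra.counit (R := F)).lTensor H c) := by
    intro c
    induction c using TensorProduct.induction_on with
    | zero => simp
    | tmul a b => simp
    | add x y hx hy => simp only [map_add, hx, hy]
  rw [conv_apply, A, Coalgebra.lTensor_counit_comul]
  simp

/-- `Δ ⋆ (Δ ∘ S) = η ∘ ε` in `Hom(H, H ⊗ H)`. -/
lemma conv_comul_comulAntipode :
    conv (Coalgebra.comul (R := F) (A := H))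
        ((Coalgebra.comul (R := F)) ∘ₗ (antipode (R := F))) =
      (Algebra.linearMap F (H ⊗[F] H)) ∘ₗ Coalgebra.counit := by
  apply LinearMap.ext; intro h
  have A : ∀ c : H ⊗[F] H,
      LinearMap.mul' F (H ⊗[F] H)
        (TensorProduct.map Coalgebra.comul
          ((Coalgebra.comul (R := F)) ∘ₗ (antipode (R := F))) c) =
      Coalgebra.comul (R := F)
        (LinearMap.mul' F H ((antipode (R := F)).lTensor H c)) := by
    intro c
    induction c using TensorProduct.induction_on with
    | zero => simp
    | tmul a b => simp
    | add x y hx hy => simp [hx, hy]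
  rw [conv_apply, A, mul_antipode_lTensor_comul_apply]
  simp

/-- `(Δ ∘ S) ⋆ Δ = η ∘ ε` in `Hom(H, H ⊗ H)`. -/
lemma conv_comulAntipode_comul :
    conv ((Coalgebra.comul (R := F) (A := H)) ∘ₗ (antipode (R := F)))
        (Coalgebra.comul (R := F)) =
      (Algebra.linearMap F (H ⊗[F] H)) ∘ₗ Coalgebra.counit := by
  apply LinearMap.ext; intro h
  have A : ∀ c : H ⊗[F] H,
      LinearMap.mul' F (H ⊗[F] H)
        (TensorProduct.map ((Coalgebra.comul (R := F)) ∘ₗ (antipode (R := F)))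
          Coalgebra.comul c) =
      Coalgebra.comul (R := F)
        (LinearMap.mul' F H ((antipode (R := F)).rTensor H c)) := by
    intro c
    induction c using TensorProduct.induction_on with
    | zero => simp
    | tmul a b => simp
    | add x y hx hy => simp [hx, hy]
  rw [conv_apply, A, mul_antipode_rTensor_comul_apply]
  simp

/-- `Δ ⋆ (h ↦ 1 ⊗ S h) = (h ↦ h ⊗ 1)` in `Hom(H, H ⊗ H)`. -/
lemma conv_comul_mkAntipode :
    conv (Coalgebra.comul (R := F) (A := H))
        ((TensorProduct.mk F H H 1) ∘ₗ (antipode (R := F))) =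
      (TensorProduct.mk F H H).flip 1 := by
  apply LinearMap.ext; intro h
  have aux0 : ∀ (d : H ⊗[F] H) (x : H),
      d * ((1 : H) ⊗ₜ[F] x) =
        ((LinearMap.mul' F H).lTensor H) ((TensorProduct.assoc F H H H) (d ⊗ₜ[F] x)) := by
    intro d x
    induction d using TensorProduct.induction_on with
    | zero => simp
    | tmul p q => simp [Algebra.TensorProduct.tmul_mul_tmul]
    | add a b ha hb => simp [add_mul, add_tmul, ha, hb]
  have A : ∀ c : H ⊗[F] H,
      LinearMap.mul' F (H ⊗[F] H)
        (TensorProduct.map Coalgebra.comul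
          ((TensorProduct.mk F H H 1) ∘ₗ (antipode (R := F))) c) =
      ((LinearMap.mul' F H).lTensor H)
        ((TensorProduct.assoc F H H H)
          (TensorProduct.map Coalgebra.comul (antipode (R := F)) c)) := by
    intro c
    induction c using TensorProduct.induction_on with
    | zero => simp
    | tmul a b =>
      simp only [map_tmul, LinearMap.comp_apply, mk_apply, LinearMap.mul'_apply]
      exact aux0 (Coalgebra.comul a) (antipode (R := F) b)
    | add x y hx hy => simp [hx, hy]
  rw [conv_apply, A]
  have split : TensorProduct.map (Coalgebra.comul (R := F) (A := H)) (antipode (R := F))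
      ((Coalgebra.comul (R := F)) h) =
      ((antipode (R := F)).lTensor (H ⊗[F] H))
        ((Coalgebra.comul (R := F)).rTensor H ((Coalgebra.comul (R := F)) h)) := by
    rw [← lTensor_comp_rTensor]
    rfl
  rw [split, ← Coalgebra.coassoc_symm_apply]
  have nat : ∀ y : H ⊗[F] (H ⊗[F] H),
      (TensorProduct.assoc F H H H)
        (((antipode (R := F)).lTensor (H ⊗[F] H))
          ((TensorProduct.assoc F H H H).symm y)) =
      ((antipode (R := F)).lTensor H).lTensor H y := by
    intro y
    have := TensorProduct.map_map_assoc (R := F) (LinearMap.id (M := H))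
      (LinearMap.id (M := H)) (antipode (R := F))
      ((TensorProduct.assoc F H H H).symm y)
    simp only [TensorProduct.map_id, LinearEquiv.apply_symm_apply] at this
    exact this.symm
  rw [nat]
  rw [← LinearMap.comp_apply, ← lTensor_comp, ← LinearMap.comp_apply, ← lTensor_comp]
  have ax : ((LinearMap.mul' F H ∘ₗ (antipode (R := F)).lTensor H) ∘ₗ
        (Coalgebra.comul (R := F))) =
      (Algebra.linearMap F H) ∘ₗ Coalgebra.counit := by
    rw [LinearMap.comp_assoc]
    exact mul_antipode_lTensor_comul
  rw [ax, lTensor_comp, LinearMap.comp_apply, Coalgebra.lTensor_counit_comul]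
  simp

/-- The key Hopf-algebra identity: `(Δ ∘ S) ⋆ (h ↦ h ⊗ 1) = (h ↦ 1 ⊗ S h)`. -/
lemma key :
    conv ((Coalgebra.comul (R := F) (A := H)) ∘ₗ (antipode (R := F)))
        ((TensorProduct.mk F H H).flip 1) =
      (TensorProduct.mk F H H 1) ∘ₗ (antipode (R := F)) := by
  calc
    conv ((Coalgebra.comul (R := F) (A := H)) ∘ₗ (antipode (R := F)))
        ((TensorProduct.mk F H H).flip 1)
      = conv ((Coalgebra.comul (R := F)) ∘ₗ (antipode (R := F)))
          (conv (Coalgebra.comul (R := F))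
            ((TensorProduct.mk F H H 1) ∘ₗ (antipode (R := F)))) := by
        rw [conv_comul_mkAntipode]
    _ = conv (conv ((Coalgebra.comul (R := F)) ∘ₗ (antipode (R := F)))
          (Coalgebra.comul (R := F)))
          ((TensorProduct.mk F H H 1) ∘ₗ (antipode (R := F))) := (conv_assoc _ _ _).symm
    _ = conv ((Algebra.linearMap F (H ⊗[F] H)) ∘ₗ Coalgebra.counit)
          ((TensorProduct.mk F H H 1) ∘ₗ (antipode (R := F))) := by
        rw [conv_comulAntipode_comul]
    _ = (TensorProduct.mk F H H 1) ∘ₗ (antipode (R := F)) := conv_unit_left _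

end FTHMaux

end FTHMauxSection

/-- Fundamental theorem of Hopf modules: for a left Hopf module `M` over a
Hopf algebra `H`, the map `θ : H ⊗ M^{coH} → M`, `h ⊗ m ↦ h · m`, is an
isomorphism of Hopf modules, with inverse
`m ↦ m₍₋₁₎₍₁₎ ⊗ S(m₍₋₁₎₍₂₎) · m₍₀₎`. -/
theorem fundamental_theorem_hopf_modules (F H M : Type*) [Field F] [Ring H]
    [HopfAlgebra F H] [AddCommGroup M] [Module F M]
    (act : H →ₗ[F] M →ₗ[F] M)
    (hact_one : act 1 = LinearMap.id)
    (hact_mul : ∀ h h' : H, act (h * h') = act h ∘ₗ act h')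
    (ρ : M →ₗ[F] H ⊗[F] M)
    (hcounit : ∀ m : M,
      (TensorProduct.lid F M)
        (TensorProduct.map (Coalgebra.counit (R := F)) LinearMap.id (ρ m)) = m)
    (hcoassoc : ∀ m : M,
      (TensorProduct.assoc F H H M)
        (TensorProduct.map (Coalgebra.comul (R := F)) LinearMap.id (ρ m)) =
      TensorProduct.map LinearMap.id ρ (ρ m))
    (hhopf : ρ ∘ₗ TensorProduct.lift act =
      TensorProduct.map (LinearMap.mul' F H) (TensorProduct.lift act) ∘ₗ
        (TensorProduct.tensorTensorTensorComm F H H H M).toLinearMap ∘ₗ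
          TensorProduct.map (Coalgebra.comul (R := F)) ρ)
    -- the coinvariants `M^{coH} = {m | ρ m = 1 ⊗ m}` as a submodule
    (coinv : Submodule F M)
    (hcoinv : coinv = LinearMap.ker (ρ - TensorProduct.mk F H M 1))
    -- `θ : H ⊗ M^{coH} → M`, `h ⊗ m ↦ h · m`
    (θ : H ⊗[F] coinv →ₗ[F] M)
    (hθ : θ = TensorProduct.lift act ∘ₗ TensorProduct.map LinearMap.id coinv.subtype) :
    -- θ is bijective
    Function.Bijective θ ∧
    -- θ is H-linear for the action h' · (h ⊗ m) = h'h ⊗ m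
    (∀ (h' h : H) (m : coinv),
      θ ((h' * h) ⊗ₜ[F] m) = TensorProduct.lift act (h' ⊗ₜ[F] θ (h ⊗ₜ[F] m))) ∧
    -- θ is H-colinear for the coaction h ⊗ m ↦ h₍₁₎ ⊗ (h₍₂₎ ⊗ m)
    (ρ ∘ₗ θ =
      TensorProduct.map LinearMap.id θ ∘ₗ
        (TensorProduct.assoc F H H coinv).toLinearMap ∘ₗ
          TensorProduct.map (Coalgebra.comul (R := F)) LinearMap.id) ∧
    -- the inverse of θ is m ↦ m₍₋₁₎₍₁₎ ⊗ S(m₍₋₁₎₍₂₎) · m₍₀₎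
    (∀ x : H ⊗[F] coinv,
      (TensorProduct.map LinearMap.id
          (TensorProduct.lift act ∘ₗ
            TensorProduct.map (HopfAlgebra.antipode (R := F)) LinearMap.id) ∘ₗ
        (TensorProduct.assoc F H H M).toLinearMap ∘ₗ
          TensorProduct.map (Coalgebra.comul (R := F)) LinearMap.id ∘ₗ ρ) (θ x) =
        TensorProduct.map LinearMap.id coinv.subtype x) := by
  -- `Θ` is the concrete form of `θ`
  subst hθ
  set Θ : H ⊗[F] coinv →ₗ[F] M :=
    TensorProduct.lift act ∘ₗ TensorProduct.map LinearMap.id coinv.subtype with hΘ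
  have Θt : ∀ (a : H) (m : coinv), Θ (a ⊗ₜ[F] m) = act a (m : M) := by
    intro a m; simp [hΘ]
  have hact_mul' : ∀ (a b : H) (x : M), act (a * b) x = act a (act b x) := by
    intro a b x; rw [hact_mul]; rfl
  have hact_alg : ∀ (r : F) (x : M), act (algebraMap F H r) x = r • x := by
    intro r x
    rw [Algebra.algebraMap_eq_smul_one, map_smul, LinearMap.smul_apply, hact_one,
      LinearMap.id_apply]
  -- membership in the coinvariants
  have ρc : ∀ m : coinv, ρ (m : M) = (1 : H) ⊗ₜ[F] (m : M) := by
    intro m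
    have hm := hcoinv.le m.2
    rw [LinearMap.mem_ker, LinearMap.sub_apply, sub_eq_zero] at hm
    simpa using hm
  -- the Hopf-module compatibility, pointwise
  have hh : ∀ z : H ⊗[F] M,
      ρ (TensorProduct.lift act z) =
        TensorProduct.map (LinearMap.mul' F H) (TensorProduct.lift act)
          ((TensorProduct.tensorTensorTensorComm F H H H M)
            (TensorProduct.map (Coalgebra.comul (R := F)) ρ z)) := by
    intro z
    have := LinearMap.congr_fun hhopf z
    simpa [LinearMap.comp_apply] using this
  -- the coaction on `act a m` for coinvariant `m`
  have hρθ : ∀ (a : H) (m : coinv),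
      ρ (act a (m : M)) =
        TensorProduct.map LinearMap.id Θ
          ((TensorProduct.assoc F H H coinv) ((Coalgebra.comul (R := F) a) ⊗ₜ[F] m)) := by
    intro a m
    have h1 : ρ (act a (m : M)) =
        TensorProduct.map (LinearMap.mul' F H) (TensorProduct.lift act)
          ((TensorProduct.tensorTensorTensorComm F H H H M)
            ((Coalgebra.comul (R := F) a) ⊗ₜ[F] ((1 : H) ⊗ₜ[F] (m : M)))) := by
      have := hh (a ⊗ₜ[F] (m : M))
      rw [lift.tmul] at this
      rw [this, map_tmul, ρc m]
    rw [h1]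
    have aux : ∀ c : H ⊗[F] H,
        TensorProduct.map (LinearMap.mul' F H) (TensorProduct.lift act)
          ((TensorProduct.tensorTensorTensorComm F H H H M)
            (c ⊗ₜ[F] ((1 : H) ⊗ₜ[F] (m : M)))) =
        TensorProduct.map LinearMap.id Θ
          ((TensorProduct.assoc F H H coinv) (c ⊗ₜ[F] m)) := by
      intro c
      induction c using TensorProduct.induction_on with
      | zero => simp
      | tmul p q => simp [Θt]
      | add x y hx hy => simp [add_tmul, hx, hy]
    exact aux _
  -- H-colinearity of Θ
  have colin : ρ ∘ₗ Θ =
      TensorProduct.map LinearMap.id Θ ∘ₗ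
        (TensorProduct.assoc F H H coinv).toLinearMap ∘ₗ
          TensorProduct.map (Coalgebra.comul (R := F)) LinearMap.id := by
    apply TensorProduct.ext'
    intro a m
    simp only [LinearMap.comp_apply, LinearEquiv.coe_coe, map_tmul, LinearMap.id_apply]
    rw [Θt, hρθ]
  -- the potential "inverse-producing" map `P`
  set P : M →ₗ[F] M :=
    TensorProduct.lift act ∘ₗ
      TensorProduct.map (HopfAlgebra.antipode (R := F)) LinearMap.id ∘ₗ ρ with hP
  have hPapp : ∀ x : M, P x =
      TensorProduct.lift act
        (TensorProduct.map (HopfAlgebra.antipode (R := F)) LinearMap.id (ρ x)) := by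
    intro x; rfl
  -- `P (act a m) = ε a • m` for coinvariant `m`
  have Pθ : ∀ (a : H) (m : coinv),
      P (act a (m : M)) = Coalgebra.counit (R := F) a • (m : M) := by
    intro a m
    rw [hPapp, hρθ]
    have aux : ∀ c : H ⊗[F] H,
        TensorProduct.lift act
          (TensorProduct.map (HopfAlgebra.antipode (R := F)) LinearMap.id
            (TensorProduct.map LinearMap.id Θ
              ((TensorProduct.assoc F H H coinv) (c ⊗ₜ[F] m)))) =
        act (LinearMap.mul' F H ((HopfAlgebra.antipode (R := F)).rTensor H c)) (m : M) := by
      intro c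
      induction c using TensorProduct.induction_on with
      | zero => simp
      | tmul p q =>
        simp only [LinearEquiv.coe_coe, assoc_tmul, map_tmul, LinearMap.id_apply,
          lift.tmul, rTensor_tmul, LinearMap.mul'_apply]
        rw [Θt, hact_mul']
      | add x y hx hy =>
        simp only [add_tmul, map_add, LinearMap.add_apply, hx, hy]
    rw [aux, HopfAlgebra.mul_antipode_rTensor_comul_apply, hact_alg]
  -- claim A : the big map in the statement, applied after ρ, is `(1 ⊗ P) ∘ ρ`
  have ΦA : ∀ x : M,
      TensorProduct.map LinearMap.id
          (TensorProduct.lift act ∘ₗ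
            TensorProduct.map (HopfAlgebra.antipode (R := F)) LinearMap.id)
        ((TensorProduct.assoc F H H M)
          (TensorProduct.map (Coalgebra.comul (R := F)) LinearMap.id (ρ x))) =
      TensorProduct.map LinearMap.id P (ρ x) := by
    intro x
    rw [hcoassoc x]
    rw [← LinearMap.comp_apply, ← TensorProduct.map_comp, LinearMap.id_comp, hP,
      LinearMap.comp_assoc]
  -- claim 4 (inverse formula): the big map sends `Θ x` back to `x` (inside `H ⊗ M`)
  have claim4 : ∀ x : H ⊗[F] coinv,
      TensorProduct.map LinearMap.id P (ρ (Θ x)) =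
        TensorProduct.map LinearMap.id coinv.subtype x := by
    intro x
    induction x using TensorProduct.induction_on with
    | zero => simp
    | tmul a m =>
      rw [Θt, hρθ]
      have aux : ∀ c : H ⊗[F] H,
          TensorProduct.map LinearMap.id P
            (TensorProduct.map LinearMap.id Θ
              ((TensorProduct.assoc F H H coinv) (c ⊗ₜ[F] m))) =
          (TensorProduct.mk F H M).flip (m : M)
            ((TensorProduct.rid F H) ((Coalgebra.counit (R := F)).lTensor H c)) := by
        intro c
        induction c using TensorProduct.induction_on with
        | zero => simp
        | tmul p q =>
          simp only [LinearEquiv.coe_coe, assoc_tmul, map_tmul, LinearMap.id_apply,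
            lTensor_tmul, rid_tmul, flip_apply, mk_apply]
          rw [Θt, Pθ, tmul_smul, smul_tmul']
        | add x y hx hy => simp only [add_tmul, map_add, hx, hy]
      rw [aux, Coalgebra.lTensor_counit_comul]
      simp
    | add x y hx hy => simp only [map_add, hx, hy]
  -- key fact: `P x` is always coinvariant
  have keyB : ∀ x : M, ρ (P x) = (1 : H) ⊗ₜ[F] (P x) := by
    intro x
    have h1 : ρ (P x) =
        TensorProduct.map (LinearMap.mul' F H) (TensorProduct.lift act)
          ((TensorProduct.tensorTensorTensorComm F H H H M)
            (TensorProduct.map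
              ((Coalgebra.comul (R := F)) ∘ₗ (HopfAlgebra.antipode (R := F)))
              LinearMap.id
              ((TensorProduct.assoc F H H M)
                (TensorProduct.map (Coalgebra.comul (R := F)) LinearMap.id (ρ x))))) := by
      rw [hPapp, hh]
      congr 1
      congr 1
      rw [hcoassoc x]
      have comb : TensorProduct.map (Coalgebra.comul (R := F)) ρ ∘ₗ
          TensorProduct.map (HopfAlgebra.antipode (R := F)) (LinearMap.id (M := M)) =
          TensorProduct.map
              ((Coalgebra.comul (R := F)) ∘ₗ (HopfAlgebra.antipode (R := F)))
              (LinearMap.id (M := H ⊗[F] M)) ∘ₗ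
            TensorProduct.map (LinearMap.id (M := H)) ρ := by
        simp only [← TensorProduct.map_comp]
        simp
      exact LinearMap.congr_fun comb (ρ x)
    set V₂ : H ⊗[F] H →ₗ[F] H ⊗[F] H :=
      LinearMap.mul' F (H ⊗[F] H) ∘ₗ
        TensorProduct.map
          ((Coalgebra.comul (R := F)) ∘ₗ (HopfAlgebra.antipode (R := F)))
          ((TensorProduct.mk F H H).flip 1) with hV₂
    have aux2 : ∀ (d : H ⊗[F] H) (b : H) (y : M),
        TensorProduct.map (LinearMap.mul' F H) (TensorProduct.lift act)
          ((TensorProduct.tensorTensorTensorComm F H H H M) (d ⊗ₜ[F] (b ⊗ₜ[F] y))) =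
        TensorProduct.map LinearMap.id (TensorProduct.lift act)
          ((TensorProduct.assoc F H H M)
            ((LinearMap.mul' F (H ⊗[F] H)) (d ⊗ₜ[F] (b ⊗ₜ[F] (1 : H))) ⊗ₜ[F] y)) := by
      intro d b y
      induction d using TensorProduct.induction_on with
      | zero => simp
      | tmul p q => simp [Algebra.TensorProduct.tmul_mul_tmul]
      | add u v hu hv =>
        simp only [add_tmul, map_add, LinearMap.add_apply, hu, hv]
    have Dd : ∀ w : (H ⊗[F] H) ⊗[F] M,
        TensorProduct.map (LinearMap.mul' F H) (TensorProduct.lift act)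
          ((TensorProduct.tensorTensorTensorComm F H H H M)
            (TensorProduct.map
              ((Coalgebra.comul (R := F)) ∘ₗ (HopfAlgebra.antipode (R := F)))
              LinearMap.id
              ((TensorProduct.assoc F H H M) w))) =
        TensorProduct.map LinearMap.id (TensorProduct.lift act)
          ((TensorProduct.assoc F H H M)
            (TensorProduct.map V₂ LinearMap.id w)) := by
      intro w
      induction w using TensorProduct.induction_on with
      | zero => simp
      | add u v hu hv => simp only [map_add, hu, hv]
      | tmul c y =>
        induction c using TensorProduct.induction_on with
        | zero => simp
        | add u v hu hv => simp only [add_tmul, map_add, hu, hv]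
        | tmul a b =>
          simp only [LinearEquiv.coe_coe, assoc_tmul, map_tmul, LinearMap.id_apply,
            LinearMap.comp_apply, hV₂, flip_apply, mk_apply]
          exact aux2 _ b y
    rw [h1, Dd]
    rw [← LinearMap.comp_apply (TensorProduct.map V₂ LinearMap.id), ← TensorProduct.map_comp]
    have hkey : V₂ ∘ₗ (Coalgebra.comul (R := F)) =
        (TensorProduct.mk F H H 1) ∘ₗ (HopfAlgebra.antipode (R := F)) := by
      have := FTHMaux.key (F := F) (H := H)
      rw [FTHMaux.conv] at this
      rw [hV₂, LinearMap.comp_assoc]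
      exact this
    rw [hkey]
    have final : ∀ z : H ⊗[F] M,
        TensorProduct.map LinearMap.id (TensorProduct.lift act)
          ((TensorProduct.assoc F H H M)
            (TensorProduct.map
              ((TensorProduct.mk F H H 1) ∘ₗ (HopfAlgebra.antipode (R := F)))
              (LinearMap.id ∘ₗ LinearMap.id) z)) =
        (1 : H) ⊗ₜ[F]
          (TensorProduct.lift act
            (TensorProduct.map (HopfAlgebra.antipode (R := F)) LinearMap.id z)) := by
      intro z
      induction z using TensorProduct.induction_on with
      | zero => simp
      | tmul p y => simp
      | add u v hu hv => simp only [map_add, hu, hv, tmul_add]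
    rw [final, hPapp]
  have Pmem : ∀ x : M, P x ∈ coinv := by
    intro x
    rw [hcoinv, LinearMap.mem_ker, LinearMap.sub_apply, sub_eq_zero, keyB x]
    simp
  -- surjectivity
  have surj : Function.Surjective Θ := by
    intro y
    refine ⟨TensorProduct.map LinearMap.id (P.codRestrict coinv Pmem) (ρ y), ?_⟩
    rw [hΘ, LinearMap.comp_apply, ← LinearMap.comp_apply (TensorProduct.map _ _),
      ← TensorProduct.map_comp, LinearMap.id_comp, LinearMap.subtype_comp_codRestrict]
    rw [← ΦA y]
    have K : TensorProduct.lift act ∘ₗ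
        TensorProduct.map LinearMap.id
          (TensorProduct.lift act ∘ₗ
            TensorProduct.map (HopfAlgebra.antipode (R := F)) LinearMap.id) ∘ₗ
        (TensorProduct.assoc F H H M).toLinearMap =
        TensorProduct.lift act ∘ₗ
          TensorProduct.map
            (LinearMap.mul' F H ∘ₗ (HopfAlgebra.antipode (R := F)).lTensor H)
            LinearMap.id := by
      apply TensorProduct.ext_threefold
      intro a b x
      simp only [LinearMap.comp_apply, LinearEquiv.coe_coe, assoc_tmul, map_tmul,
        LinearMap.id_apply, lift.tmul, lTensor_tmul, LinearMap.mul'_apply]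
      rw [hact_mul']
    have := LinearMap.congr_fun K
      (TensorProduct.map (Coalgebra.comul (R := F)) LinearMap.id (ρ y))
    simp only [LinearMap.comp_apply, LinearEquiv.coe_coe] at this
    rw [this]
    rw [← LinearMap.comp_apply (TensorProduct.map _ _), ← TensorProduct.map_comp,
      LinearMap.id_comp, LinearMap.comp_assoc, HopfAlgebra.mul_antipode_lTensor_comul]
    have L : TensorProduct.lift act ∘ₗ
        TensorProduct.map ((Algebra.linearMap F H) ∘ₗ (Coalgebra.counit (R := F) (A := H)))
          (LinearMap.id (M := M)) =
        (TensorProduct.lid F M).toLinearMap ∘ₗ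
          TensorProduct.map (Coalgebra.counit (R := F) (A := H)) (LinearMap.id (M := M)) := by
      apply TensorProduct.ext'
      intro a x
      simp [hact_alg]
    rw [← LinearMap.comp_apply, L, LinearMap.comp_apply]
    exact hcounit y
  -- injectivity
  have inj : Function.Injective Θ := by
    have hsub : Function.Injective (TensorProduct.map (LinearMap.id (M := H)) coinv.subtype) := by
      have : (TensorProduct.map (LinearMap.id (M := H)) coinv.subtype) =
          coinv.subtype.lTensor H := rfl
      rw [this]
      exact Module.Flat.lTensor_preserves_injective_linearMap coinv.subtype
        coinv.injective_subtype
    intro x y hxy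
    apply hsub
    rw [← claim4 x, ← claim4 y, hxy]
  refine ⟨⟨inj, surj⟩, ?_, colin, ?_⟩
  · intro h' h m
    rw [Θt, Θt, hact_mul', lift.tmul]
  · intro x
    simp only [LinearMap.comp_apply, LinearEquiv.coe_coe]
    rw [ΦA (Θ x)]
    exact claim4 x
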